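/- Let all query vectors q_i have Euclidean norm at most R, and suppose ‖k̃_j − k_j‖ ≤ d for all j. Define the true attention A_{i,j} = exp(q_i·k_j)/Σ_{k=1}^{n} exp(q_i·k_k) and the approximate attention Ā_{i,j} = exp(q_i·k̃_j)/Σ_{k=1}^{n} exp(q_i·k̃_k). Then exp(-2dR) ≤ Ā_{i,j}/A_{i,j} ≤ exp(2dR). In particular, for any ε > 1, if d ≤ ln(ε)/(2R) then 1/ε ≤ Ā_{i,j}/A_{i,j} ≤ ε. -/

import Mathlib

/-- Error bound of the approximate (group) attention matrix. -/
theorem attention_ratio_error_bound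
    (m n dk : ℕ) (hn : 1 ≤ n) (R d : ℝ) (hR : 0 < R) (hd : 0 ≤ d)
    (q : Fin m → EuclideanSpace ℝ (Fin dk))
    (k ktil : Fin n → EuclideanSpace ℝ (Fin dk))
    (hq : ∀ i : Fin m, ‖q i‖ ≤ R)
    (hk : ∀ j : Fin n, ‖ktil j - k j‖ ≤ d)
    (A Abar : Fin m → Fin n → ℝ)
    (hA : ∀ i j, A i j = Real.exp (inner ℝ (q i) (k j) : ℝ) /
      ∑ k' : Fin n, Real.exp (inner ℝ (q i) (k k') : ℝ))
    (hAbar : ∀ i j, Abar i j = Real.exp (inner ℝ (q i) (ktil j) : ℝ) /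
      ∑ k' : Fin n, Real.exp (inner ℝ (q i) (ktil k') : ℝ))
    (i : Fin m) (j : Fin n) :
    (Real.exp (-(2 * d * R)) ≤ Abar i j / A i j ∧
      Abar i j / A i j ≤ Real.exp (2 * d * R)) ∧
    (∀ ε : ℝ, 1 < ε → d ≤ Real.log ε / (2 * R) →
      1 / ε ≤ Abar i j / A i j ∧ Abar i j / A i j ≤ ε) := by
  have hfin : Nonempty (Fin n) := ⟨⟨0, hn⟩⟩
  set a : Fin n → ℝ := fun k' => (inner ℝ (q i) (k k') : ℝ) with ha
  set b : Fin n → ℝ := fun k' => (inner ℝ (q i) (ktil k') : ℝ) with hb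
  have hdiff : ∀ j' : Fin n, |b j' - a j'| ≤ d * R := by
    intro j'
    have h1 : b j' - a j' = (inner ℝ (q i) (ktil j' - k j') : ℝ) := by
      simp [ha, hb, inner_sub_right]
    rw [h1]
    calc |(inner ℝ (q i) (ktil j' - k j') : ℝ)| ≤ ‖q i‖ * ‖ktil j' - k j'‖ :=
          abs_real_inner_le_norm _ _
      _ ≤ R * d := mul_le_mul (hq i) (hk j') (norm_nonneg _) hR.le
      _ = d * R := mul_comm _ _
  set Sa : ℝ := ∑ k' : Fin n, Real.exp (a k') with hSa
  set Sb : ℝ := ∑ k' : Fin n, Real.exp (b k') with hSb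
  have hSa_pos : 0 < Sa := Finset.sum_pos (fun _ _ => Real.exp_pos _) Finset.univ_nonempty
  have hSb_pos : 0 < Sb := Finset.sum_pos (fun _ _ => Real.exp_pos _) Finset.univ_nonempty
  have key : Abar i j / A i j = Real.exp (b j - a j) * (Sa / Sb) := by
    rw [hA, hAbar]
    show Real.exp (b j) / Sb / (Real.exp (a j) / Sa) = _
    rw [div_div_div_comm, ← Real.exp_sub, div_eq_mul_inv, inv_div]
  have hSa_le : Sa ≤ Real.exp (d * R) * Sb := by
    rw [hSb, Finset.mul_sum]
    apply Finset.sum_le_sum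
    intro k' _
    rw [← Real.exp_add]
    exact Real.exp_le_exp.mpr (by linarith [(abs_le.mp (hdiff k')).1])
  have hSb_le : Sb ≤ Real.exp (d * R) * Sa := by
    rw [hSa, Finset.mul_sum]
    apply Finset.sum_le_sum
    intro k' _
    rw [← Real.exp_add]
    exact Real.exp_le_exp.mpr (by linarith [(abs_le.mp (hdiff k')).2])
  have hQub : Sa / Sb ≤ Real.exp (d * R) := by
    rw [div_le_iff₀ hSb_pos]; linarith
  have hQlb : Real.exp (-(d * R)) ≤ Sa / Sb := by
    rw [le_div_iff₀ hSb_pos]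
    have h2 : Real.exp (-(d * R)) * Sb ≤ Real.exp (-(d * R)) * (Real.exp (d * R) * Sa) := by
      have := (Real.exp_pos (-(d * R))).le
      nlinarith
    rw [← mul_assoc, ← Real.exp_add] at h2
    simpa using h2
  have hEub : Real.exp (b j - a j) ≤ Real.exp (d * R) :=
    Real.exp_le_exp.mpr (abs_le.mp (hdiff j)).2
  have hElb : Real.exp (-(d * R)) ≤ Real.exp (b j - a j) :=
    Real.exp_le_exp.mpr (abs_le.mp (hdiff j)).1
  have hub : Abar i j / A i j ≤ Real.exp (2 * d * R) := by
    rw [key]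
    calc Real.exp (b j - a j) * (Sa / Sb) ≤ Real.exp (d * R) * Real.exp (d * R) :=
          mul_le_mul hEub hQub (by positivity) (Real.exp_pos _).le
      _ = Real.exp (2 * d * R) := by rw [← Real.exp_add]; ring_nf
  have hlb : Real.exp (-(2 * d * R)) ≤ Abar i j / A i j := by
    rw [key]
    calc Real.exp (-(2 * d * R)) = Real.exp (-(d * R)) * Real.exp (-(d * R)) := by
          rw [← Real.exp_add]; ring_nf
      _ ≤ Real.exp (b j - a j) * (Sa / Sb) :=
          mul_le_mul hElb hQlb (Real.exp_pos _).le (Real.exp_pos _).le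
  refine ⟨⟨hlb, hub⟩, fun ε hε hdε => ?_⟩
  have hεpos : 0 < ε := lt_trans one_pos hε
  have h2dR : 2 * d * R ≤ Real.log ε := by
    rw [le_div_iff₀ (by positivity : (0:ℝ) < 2 * R)] at hdε
    linarith
  constructor
  · calc 1 / ε = Real.exp (-Real.log ε) := by
          rw [Real.exp_neg, Real.exp_log hεpos, one_div]
      _ ≤ Real.exp (-(2 * d * R)) := Real.exp_le_exp.mpr (by linarith)
      _ ≤ Abar i j / A i j := hlb
  · calc Abar i j / A i j ≤ Real.exp (2 * d * R) := hub
      _ ≤ Real.exp (Real.log ε) := Real.exp_le_exp.mpr h2dR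
      _ = ε := Real.exp_log hεpos
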